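/- Let k ≥ 2. If φ(0) has depth at least k−1, i.e. φ(0) ∈ range(A^(k−1)), then the eigenpath φ has order at least k at 0: z^(j)(0) = 0 for j = 1, …, k−1, and the vectors W φ^(j)(0) for 0 ≤ j ≤ k−2 are orthogonal to ker(N₀* − conj(z₀)). -/

import Mathlib

open Complex MeasureTheory ContinuousLinearMap
open scoped InnerProductSpace

/-- The nilpotent operator `A = K₋₁ ∘ W`, where
`K₋₁ = (2πi)⁻¹ ∮_{|v|=r} v • R(v) dv`. -/
noncomputable def resA {H : Type*} [NormedAddCommGroup H] [NormedSpace ℂ H]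
    (R : ℂ → (H →L[ℂ] H)) (W : H →L[ℂ] H) (r : ℝ) : H →L[ℂ] H :=
  ((2 * (Real.pi : ℂ) * Complex.I)⁻¹ • ∮ v in C(0, r), v • R v) * W


open Metric Filter
open scoped Topology Real



/-- pairing of a conjugated analytic path against a constant vector is analytic -/
lemma analyticAt_conj_pairing {H : Type*} [NormedAddCommGroup H] [InnerProductSpace ℂ H]
    {ψ : ℂ → H} {ρ : ℝ} (hρ : 0 < ρ) (hψ : AnalyticOnNhd ℂ ψ (Metric.ball (0 : ℂ) ρ)) (c : H) :
    AnalyticAt ℂ (fun w => ⟪ψ ((starRingEnd ℂ) w), c⟫_ℂ) 0 := by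
  have hdiff : DifferentiableOn ℂ (fun w => ⟪ψ ((starRingEnd ℂ) w), c⟫_ℂ) (Metric.ball 0 ρ) := by
    intro w₀ hw₀
    have hw₀' : (starRingEnd ℂ) w₀ ∈ Metric.ball (0 : ℂ) ρ := by
      simpa [Metric.mem_ball, Complex.dist_eq] using hw₀
    set g : ℂ → ℂ := fun v => ⟪c, ψ v⟫_ℂ with hg
    have hganal : AnalyticAt ℂ g ((starRingEnd ℂ) w₀) :=
      ((innerSL ℂ c).analyticAt _).comp (hψ _ hw₀')
    set d : ℂ := deriv g ((starRingEnd ℂ) w₀) with hd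
    have hgd : HasDerivAt g d ((starRingEnd ℂ) w₀) :=
      hganal.differentiableAt.hasDerivAt
    have hslope : Tendsto (slope g ((starRingEnd ℂ) w₀)) (𝓝[≠] ((starRingEnd ℂ) w₀)) (𝓝 d) :=
      hasDerivAt_iff_tendsto_slope.mp hgd
    have hconj : Tendsto (fun w => (starRingEnd ℂ) w) (𝓝[≠] w₀) (𝓝[≠] ((starRingEnd ℂ) w₀)) := by
      rw [nhdsWithin, nhdsWithin]
      refine Tendsto.inf ?_ ?_
      · exact (Complex.continuous_conj.tendsto w₀)
      · refine tendsto_principal_principal.2 fun x hx => ?_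
        simp only [Set.mem_compl_iff, Set.mem_singleton_iff] at hx ⊢
        exact fun h => hx ((starRingEnd ℂ).injective h)
    have hT : Tendsto (fun w => (starRingEnd ℂ) (slope g ((starRingEnd ℂ) w₀) ((starRingEnd ℂ) w)))
        (𝓝[≠] w₀) (𝓝 ((starRingEnd ℂ) d)) :=
      (Complex.continuous_conj.tendsto d).comp (hslope.comp hconj)
    have heq : ∀ w : ℂ, (starRingEnd ℂ) (slope g ((starRingEnd ℂ) w₀) ((starRingEnd ℂ) w)) =
        slope (fun w => ⟪ψ ((starRingEnd ℂ) w), c⟫_ℂ) w₀ w := by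
      intro w
      simp only [slope_def_field, hg]
      rw [map_div₀, map_sub, map_sub, Complex.conj_conj, Complex.conj_conj,
        inner_conj_symm, inner_conj_symm]
    have : HasDerivAt (fun w => ⟪ψ ((starRingEnd ℂ) w), c⟫_ℂ) ((starRingEnd ℂ) d) w₀ :=
      hasDerivAt_iff_tendsto_slope.mpr (hT.congr heq)
    exact this.differentiableAt.differentiableWithinAt
  exact hdiff.analyticAt (Metric.ball_mem_nhds 0 hρ)


/-- an analytic at 0 function gives an analytic function on an open nbhd; its deriv is analytic -/
lemma AnalyticAt.deriv' {e : ℂ → ℂ} (he : AnalyticAt ℂ e 0) : AnalyticAt ℂ (deriv e) 0 := by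
  rcases _root_.eventually_nhds_iff.mp he.eventually_analyticAt with ⟨t, ht, hto, h0⟩
  exact (AnalyticOnNhd.deriv (fun x hx => ht x hx)) 0 h0

/-- vanishing to order `n` kills iterated derivatives below `n` -/
lemma iteratedDeriv_eq_zero_of_factor :
    ∀ (j : ℕ) (n : ℕ) (f e : ℂ → ℂ), j < n → AnalyticAt ℂ e 0 →
      (f =ᶠ[𝓝 (0 : ℂ)] fun w => w ^ n * e w) → iteratedDeriv j f 0 = 0 := by
  intro j
  induction j with
  | zero =>
    intro n f e hjn he hf
    simp only [iteratedDeriv_zero]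
    have h0 := hf.self_of_nhds
    simp only [h0]
    rw [zero_pow (by omega : n ≠ 0), zero_mul]
  | succ j ih =>
    intro n f e hjn he hf
    obtain ⟨n', rfl⟩ : ∃ n', n = n' + 1 := ⟨n - 1, by omega⟩
    rw [iteratedDeriv_succ']
    have hder : deriv f =ᶠ[𝓝 (0:ℂ)] fun w => w ^ n' * ((n' + 1 : ℂ) * e w + w * deriv e w) := by
      refine (hf.deriv).trans ?_
      have hev : ∀ᶠ w in 𝓝 (0 : ℂ), AnalyticAt ℂ e w := he.eventually_analyticAt
      filter_upwards [hev] with w hw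
      have h1 : HasDerivAt (fun w : ℂ => w ^ (n' + 1) * e w)
          ((↑(n' + 1) * w ^ n') * e w + w ^ (n' + 1) * deriv e w) w :=
        (hasDerivAt_pow (n' + 1) w).mul hw.differentiableAt.hasDerivAt
      rw [h1.deriv]
      push_cast
      ring
    exact ih n' (deriv f) _ (by omega)
      ((analyticAt_const.mul he).add (analyticAt_id.mul he.deriv')) hder

/-- two functions continuous at 0 agreeing on a punctured neighborhood agree near 0 -/
lemma eventuallyEq_of_punctured {f g : ℂ → ℂ} (hf : ContinuousAt f 0) (hg : ContinuousAt g 0)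
    (h : ∀ᶠ w in 𝓝[≠] (0 : ℂ), f w = g w) : f =ᶠ[𝓝 (0 : ℂ)] g := by
  have h0 : f 0 = g 0 := by
    refine tendsto_nhds_unique_of_eventuallyEq
      (hf.tendsto.mono_left nhdsWithin_le_nhds)
      (hg.tendsto.mono_left nhdsWithin_le_nhds) h
  have h' := eventually_nhdsWithin_iff.mp h
  filter_upwards [h'] with w hw
  by_cases hw0 : w = 0
  · subst hw0; exact h0
  · exact hw hw0

/-- iterated derivatives commute with continuous linear maps along analytic functions -/
lemma iteratedDeriv_clm_comp {H E : Type*} [NormedAddCommGroup H] [NormedSpace ℂ H]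
    [NormedAddCommGroup E] [NormedSpace ℂ E] [CompleteSpace H] [CompleteSpace E]
    {ρ : ℝ} (hρ : 0 < ρ) (T : H →L[ℂ] E) :
    ∀ (j : ℕ) (f : ℂ → H), AnalyticOnNhd ℂ f (Metric.ball (0 : ℂ) ρ) →
      iteratedDeriv j (fun w => T (f w)) 0 = T (iteratedDeriv j f 0) := by
  intro j
  induction j with
  | zero => intro f hf; simp
  | succ j ih =>
    intro f hf
    rw [iteratedDeriv_succ', iteratedDeriv_succ']
    have heq : (fun w => deriv (fun w => T (f w)) w) =ᶠ[𝓝 (0 : ℂ)]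
        (fun w => T (deriv f w)) := by
      filter_upwards [Metric.ball_mem_nhds (0 : ℂ) hρ] with w hw
      exact (T.hasFDerivAt.comp_hasDerivAt w (hf w hw).differentiableAt.hasDerivAt).deriv
    rw [heq.iteratedDeriv_eq j]
    exact ih (deriv f) (hf.deriv)

/-- Laurent-type circle-integral coefficients of the resolvent family. -/
noncomputable def resL {H : Type*} [NormedAddCommGroup H] [NormedSpace ℂ H]
    (R : ℂ → (H →L[ℂ] H)) (r : ℝ) (n : ℤ) : H →L[ℂ] H :=
  (2 * (Real.pi : ℂ) * Complex.I)⁻¹ • ∮ v in C(0, r), (v ^ (-n) : ℂ) • R v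

lemma resL_rel {H : Type*} [NormedAddCommGroup H] [InnerProductSpace ℂ H] [CompleteSpace H]
    (N₀ W : H →L[ℂ] H) (z₀ : ℂ) {r : ℝ} (hr : 0 < r) (R : ℂ → (H →L[ℂ] H))
    (hR : ∀ v : ℂ, v ≠ 0 → ‖v‖ ≤ r →
      (N₀ + v • W - z₀ • (1 : H →L[ℂ] H)) * R v = 1 ∧
      R v * (N₀ + v • W - z₀ • (1 : H →L[ℂ] H)) = 1) (n : ℤ) :
    (N₀ - z₀ • 1) * resL R r n + W * resL R r (n - 1) =
      if n = 1 then (1 : H →L[ℂ] H) else 0 := by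
  have hsph : ∀ v : ℂ, v ∈ Metric.sphere (0 : ℂ) r → v ≠ 0 ∧ ‖v‖ ≤ r := by
    intro v hv
    rw [mem_sphere_zero_iff_norm] at hv
    exact ⟨norm_pos_iff.mp (hv ▸ hr), le_of_eq hv⟩
  have hRcont : ContinuousOn R (Metric.sphere (0 : ℂ) r) := by
    have hgcont : Continuous (fun v : ℂ => N₀ + v • W - z₀ • (1 : H →L[ℂ] H)) := by
      exact (continuous_const.add (continuous_id.smul continuous_const)).sub continuous_const
    intro v hv
    obtain ⟨hv0, hvr⟩ := hsph v hv
    have hinv : ∀ w : ℂ, w ∈ Metric.sphere (0 : ℂ) r →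
        R w = Ring.inverse (N₀ + w • W - z₀ • (1 : H →L[ℂ] H)) := by
      intro w hw
      obtain ⟨hw0, hwr⟩ := hsph w hw
      exact (Ring.inverse_unit
        ⟨N₀ + w • W - z₀ • (1 : H →L[ℂ] H), R w, (hR w hw0 hwr).1, (hR w hw0 hwr).2⟩).symm
    have hc : ContinuousAt (fun w : ℂ => Ring.inverse (N₀ + w • W - z₀ • (1 : H →L[ℂ] H))) v := by
      have h2 := NormedRing.inverse_continuousAt
        (⟨N₀ + v • W - z₀ • (1 : H →L[ℂ] H), R v, (hR v hv0 hvr).1, (hR v hv0 hvr).2⟩ :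
          (H →L[ℂ] H)ˣ)
      exact ContinuousAt.comp (g := Ring.inverse)
        (show ContinuousAt Ring.inverse
          ((fun w : ℂ => N₀ + w • W - z₀ • (1 : H →L[ℂ] H)) v) from h2) hgcont.continuousAt
    exact hc.continuousWithinAt.congr hinv (hinv v hv)
  have hIntMul : ∀ (T : H →L[ℂ] H) (m : ℤ),
      CircleIntegrable (fun v => (v ^ m : ℂ) • (T * R v)) 0 r := by
    intro T m
    refine ContinuousOn.circleIntegrable hr.le ?_
    intro v hv
    refine ContinuousWithinAt.smul
      ((continuousAt_zpow₀ v m (Or.inl (hsph v hv).1)).continuousWithinAt) ?_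
    exact (((ContinuousLinearMap.mul ℂ (H →L[ℂ] H) T).continuous.comp_continuousOn hRcont) v hv)
  have hInt : ∀ (m : ℤ), CircleIntegrable (fun v => (v ^ m : ℂ) • R v) 0 r := by
    intro m
    refine ContinuousOn.circleIntegrable hr.le ?_
    intro v hv
    exact ContinuousWithinAt.smul
      ((continuousAt_zpow₀ v m (Or.inl (hsph v hv).1)).continuousWithinAt) (hRcont v hv)
  have hkey : ∀ (T : H →L[ℂ] H) (m : ℤ),
      T * ((2 * (Real.pi : ℂ) * Complex.I)⁻¹ • ∮ v in C(0, r), (v ^ m : ℂ) • R v) =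
      (2 * (Real.pi : ℂ) * Complex.I)⁻¹ • ∮ v in C(0, r), (v ^ m : ℂ) • (T * R v) := by
    intro T m
    rw [mul_smul_comm]
    congr 1
    have h1 : (∫ θ in (0:ℝ)..2 * π,
          (ContinuousLinearMap.mul ℂ (H →L[ℂ] H) T)
            (deriv (circleMap 0 r) θ • ((circleMap 0 r θ ^ m : ℂ) • R (circleMap 0 r θ))))
        = (ContinuousLinearMap.mul ℂ (H →L[ℂ] H) T)
            (∫ θ in (0:ℝ)..2 * π, deriv (circleMap 0 r) θ •
              ((circleMap 0 r θ ^ m : ℂ) • R (circleMap 0 r θ))) :=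
      ContinuousLinearMap.intervalIntegral_comp_comm _ (hInt m).out
    have h2 : (ContinuousLinearMap.mul ℂ (H →L[ℂ] H) T)
        (∮ v in C(0, r), (v ^ m : ℂ) • R v) = ∮ v in C(0, r), (v ^ m : ℂ) • (T * R v) := by
      simp only [circleIntegral]
      rw [← h1]
      congr 1
      funext θ
      simp only [_root_.map_smul, ContinuousLinearMap.mul_apply']
    rw [← ContinuousLinearMap.mul_apply' ℂ (H →L[ℂ] H) T, h2]
  have e1 : (N₀ - z₀ • 1) * resL R r n =
      (2 * (Real.pi : ℂ) * Complex.I)⁻¹ • ∮ v in C(0, r),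
        ((v ^ (-n) : ℂ) • ((N₀ - z₀ • 1) * R v)) := by
    rw [resL, hkey]
  have e2 : W * resL R r (n - 1) =
      (2 * (Real.pi : ℂ) * Complex.I)⁻¹ • ∮ v in C(0, r),
        ((v ^ (-(n - 1)) : ℂ) • (W * R v)) := by
    rw [resL, hkey]
  rw [e1, e2, ← smul_add]
  have hadd : (∮ v in C(0, r), ((v ^ (-n) : ℂ) • ((N₀ - z₀ • 1) * R v))) +
      (∮ v in C(0, r), ((v ^ (-(n - 1)) : ℂ) • (W * R v))) =
      ∮ v in C(0, r), (((v ^ (-n) : ℂ) • ((N₀ - z₀ • 1) * R v)) +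
        ((v ^ (-(n - 1)) : ℂ) • (W * R v))) := by
    simp only [circleIntegral]
    rw [← intervalIntegral.integral_add (hIntMul (N₀ - z₀ • 1) (-n)).out
      (hIntMul W (-(n - 1))).out]
    congr 1
    funext θ
    rw [smul_add]
  rw [hadd]
  have hcongr : (∮ v in C(0, r), (((v ^ (-n) : ℂ) • ((N₀ - z₀ • 1) * R v)) +
        ((v ^ (-(n - 1)) : ℂ) • (W * R v)))) =
      ∮ v in C(0, r), ((v ^ (-n) : ℂ) • (1 : H →L[ℂ] H)) := by
    refine circleIntegral.integral_congr hr.le ?_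
    intro v hv
    obtain ⟨hv0, hvr⟩ := hsph v hv
    have hz : (v ^ (-(n - 1)) : ℂ) = (v ^ (-n) : ℂ) * v := by
      have he : -(n - 1) = -n + 1 := by ring
      rw [he, zpow_add₀ hv0, zpow_one]
    simp only [hz, mul_smul]
    rw [← smul_add]
    congr 1
    have : (N₀ - z₀ • 1) * R v + v • (W * R v) = (N₀ + v • W - z₀ • 1) * R v := by
      rw [← smul_mul_assoc, ← add_mul]
      congr 1
      abel
    rw [this, (hR v hv0 hvr).1]
  rw [hcongr, circleIntegral.integral_smul_const]
  by_cases hn : n = 1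
  · subst hn
    have hcg : (∮ v in C(0, r), (v ^ (-1 : ℤ) : ℂ)) = ∮ v in C(0, r), (v - 0)⁻¹ :=
      circleIntegral.integral_congr hr.le (fun v hv => by simp)
    have : (∮ v in C(0, r), (v ^ (-1 : ℤ) : ℂ)) = 2 * Real.pi * Complex.I := by
      rw [hcg]
      exact circleIntegral.integral_sub_center_inv 0 hr.ne'
    rw [if_pos rfl, this, smul_smul, inv_mul_cancel₀ Complex.two_pi_I_ne_zero, one_smul]
  · have hne : -n ≠ -1 := by omega
    have hcg : (∮ v in C(0, r), (v ^ (-n : ℤ) : ℂ)) = ∮ v in C(0, r), (v - 0) ^ (-n) :=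
      circleIntegral.integral_congr hr.le (fun v hv => by simp)
    have : (∮ v in C(0, r), (v ^ (-n : ℤ) : ℂ)) = 0 := by
      rw [hcg]
      exact circleIntegral.integral_sub_zpow_of_ne hne 0 0 r
    rw [if_neg hn, this, zero_smul, smul_zero]

/-- if `φ(0)` has depth at least `k-1` (i.e. `φ(0) ∈ range A^(k-1)`), then
the eigenpath `φ` has order at least `k` at `0`:
`z^(j)(0) = 0` for `j = 1, …, k-1` and `W φ^(j)(0) ⟂ ker (N₀* - conj z₀)` for
`0 ≤ j ≤ k-2`. -/
theorem depth_implies_order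
    {H : Type*} [NormedAddCommGroup H] [InnerProductSpace ℂ H] [CompleteSpace H]
    (N₀ W : H →L[ℂ] H) (hW : IsSelfAdjoint W)
    (z₀ : ℂ) (r : ℝ) (hr : 0 < r)
    (R : ℂ → (H →L[ℂ] H))
    (hR : ∀ v : ℂ, v ≠ 0 → ‖v‖ ≤ r →
      (N₀ + v • W - z₀ • (1 : H →L[ℂ] H)) * R v = 1 ∧
      R v * (N₀ + v • W - z₀ • (1 : H →L[ℂ] H)) = 1)
    (ρ : ℝ) (hρ : 0 < ρ)
    (z : ℂ → ℂ) (φ : ℂ → H)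
    (hz : AnalyticOnNhd ℂ z (Metric.ball (0 : ℂ) ρ))
    (hφ : AnalyticOnNhd ℂ φ (Metric.ball (0 : ℂ) ρ))
    (heig : ∀ v ∈ Metric.ball (0 : ℂ) ρ, (N₀ + v • W) (φ v) = z v • φ v)
    (hφ0 : φ 0 ≠ 0) (hz0 : z 0 = z₀)
    -- the conjugate eigenpath `φ*(v) = ψ(conj v)` with `ψ` analytic
    (ψ : ℂ → H) (hψ : AnalyticOnNhd ℂ ψ (Metric.ball (0 : ℂ) ρ))
    (heigψ : ∀ v ∈ Metric.ball (0 : ℂ) ρ,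
      adjoint (N₀ + v • W) (ψ ((starRingEnd ℂ) v)) =
        (starRingEnd ℂ) (z v) • ψ ((starRingEnd ℂ) v))
    (hpair : ⟪ψ 0, φ 0⟫_ℂ ≠ 0)
    (k : ℕ) (hk : 2 ≤ k)
    (hdepth : φ 0 ∈ Set.range ⇑(resA R W r ^ (k - 1))) :
    (∀ j : ℕ, 1 ≤ j → j < k → iteratedDeriv j z 0 = 0) ∧
    (∀ j : ℕ, j + 2 ≤ k → ∀ χ : H, adjoint N₀ χ = (starRingEnd ℂ) z₀ • χ →
      ⟪χ, W (iteratedDeriv j φ 0)⟫_ℂ = 0) := by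

  classical
  have hball0 : (0 : ℂ) ∈ Metric.ball (0 : ℂ) ρ := Metric.mem_ball_self hρ
  set ζ : ℂ → ℂ := fun w => z w - z₀ with hζdef
  set ψc : ℂ → H := fun w => ψ ((starRingEnd ℂ) w) with hψcdef
  -- eigenvalue equation at the centre
  have hN0 : N₀ (φ 0) = z₀ • φ 0 := by
    have h := heig 0 hball0
    simpa [hz0] using h
  -- pairing of the conjugate path against the family
  have ψrel' : ∀ w ∈ Metric.ball (0 : ℂ) ρ, ∀ y : H,
      ⟪ψc w, N₀ y⟫_ℂ + w * ⟪ψc w, W y⟫_ℂ = z w * ⟪ψc w, y⟫_ℂ := by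
    intro w hw y
    have h1 : ⟪ψc w, (N₀ + w • W) y⟫_ℂ = ⟪adjoint (N₀ + w • W) (ψc w), y⟫_ℂ :=
      (ContinuousLinearMap.adjoint_inner_left _ _ _).symm
    rw [heigψ w hw, inner_smul_left, Complex.conj_conj] at h1
    simpa [ContinuousLinearMap.add_apply, ContinuousLinearMap.smul_apply,
      inner_add_right, inner_smul_right] using h1
  -- analyticity of the conjugate pairing
  have hpairA : ∀ c : H, AnalyticAt ℂ (fun w => ⟪ψc w, c⟫_ℂ) 0 :=
    fun c => analyticAt_conj_pairing hρ hψ c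
  -- the operator relations
  have hRel := resL_rel N₀ W z₀ hr R hR
  have hAB : ∀ y : H, (resA R W r) y = (resL R r (-1)) (W y) := by
    intro y
    have h : resA R W r = resL R r (-1) * W := by
      have he : (fun v : ℂ => (v ^ (-(-1) : ℤ) : ℂ) • R v) = fun v : ℂ => v • R v := by
        funext v
        norm_num
      rw [resA, resL, he]
    rw [h, ContinuousLinearMap.mul_apply]
  -- key pairing relation
  have RL : ∀ (n : ℤ), ∀ w ∈ Metric.ball (0 : ℂ) ρ, ∀ x : H,
      ⟪ψc w, W ((resL R r (n - 1)) x)⟫_ℂ =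
        (if n = 1 then ⟪ψc w, x⟫_ℂ else 0) + w * ⟪ψc w, W ((resL R r n) x)⟫_ℂ
          - ζ w * ⟪ψc w, (resL R r n) x⟫_ℂ := by
    intro n w hw x
    have h1 := congrArg (fun (T : H →L[ℂ] H) => ⟪ψc w, T x⟫_ℂ) (hRel n)
    simp only [ContinuousLinearMap.add_apply, ContinuousLinearMap.mul_apply,
      ContinuousLinearMap.sub_apply, ContinuousLinearMap.smul_apply,
      ContinuousLinearMap.one_apply, inner_add_right, inner_sub_right,
      inner_smul_right] at h1
    have h2 : ⟪ψc w, ((if n = 1 then (1 : H →L[ℂ] H) else 0) x)⟫_ℂ =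
        (if n = 1 then ⟪ψc w, x⟫_ℂ else 0) := by
      split <;> simp
    rw [h2] at h1
    have hy := ψrel' w hw ((resL R r n) x)
    have hζw : ζ w = z w - z₀ := rfl
    linear_combination h1 - hy + (⟪ψc w, (resL R r n) x⟫_ℂ) * hζw
  -- the telescoped base relation
  have BR : ∀ x : H, ∃ γ β : ℂ → ℂ, AnalyticAt ℂ γ 0 ∧ AnalyticAt ℂ β 0 ∧
      ∀ w ∈ Metric.ball (0 : ℂ) ρ,
        ⟪ψc w, W ((resL R r (-1)) x)⟫_ℂ =
          w * ⟪ψc w, x⟫_ℂ + w ^ (k - 1) * γ w + ζ w * β w := by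
    intro x
    set s : ℕ → ℂ → ℂ := fun n w =>
      ⟪ψc w, W ((resL R r (n : ℤ)) x)⟫_ℂ - (if n = 0 then ⟪ψc w, x⟫_ℂ else 0) with hs
    have hsA : ∀ n : ℕ, AnalyticAt ℂ (s n) 0 := by
      intro n
      by_cases hn : n = 0
      · subst hn
        simp only [hs, eq_self_iff_true, if_true]
        exact (hpairA (W ((resL R r ((0 : ℕ) : ℤ)) x))).sub (hpairA x)
      · simp only [hs, if_neg hn]
        exact (hpairA (W ((resL R r ((n : ℕ) : ℤ)) x))).sub analyticAt_const
    have srel : ∀ (n : ℕ), ∀ w ∈ Metric.ball (0 : ℂ) ρ,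
        s n w = w * s (n + 1) w - ζ w * ⟪ψc w, (resL R r ((n + 1 : ℕ) : ℤ)) x⟫_ℂ := by
      intro n w hw
      have h := RL (((n + 1 : ℕ) : ℤ)) w hw x
      have hsub : ((n + 1 : ℕ) : ℤ) - 1 = ((n : ℕ) : ℤ) := by push_cast; ring
      rw [hsub] at h
      by_cases hn : n = 0
      · subst hn
        rw [if_pos (by norm_num)] at h
        simp only [hs, eq_self_iff_true, if_true, if_neg (Nat.succ_ne_zero 0)]
        linear_combination h
      · rw [if_neg (by omega)] at h
        simp only [hs, if_neg hn, if_neg (Nat.succ_ne_zero n)]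
        linear_combination h
    have tele : ∀ N : ℕ, ∀ w ∈ Metric.ball (0 : ℂ) ρ,
        s 0 w = w ^ N * s N w -
          ζ w * (∑ i ∈ Finset.range N, w ^ i * ⟪ψc w, (resL R r ((i + 1 : ℕ) : ℤ)) x⟫_ℂ) := by
      intro N
      induction N with
      | zero => intro w _; simp
      | succ N ih =>
        intro w hw
        rw [ih w hw, srel N w hw, Finset.sum_range_succ]
        ring
    have base : ∀ w ∈ Metric.ball (0 : ℂ) ρ,
        ⟪ψc w, W ((resL R r (-1)) x)⟫_ℂ =
          w * ⟪ψc w, x⟫_ℂ + w * s 0 w - ζ w * ⟪ψc w, (resL R r 0) x⟫_ℂ := by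
      intro w hw
      have h := RL 0 w hw x
      rw [if_neg (by norm_num)] at h
      have h0 : ((0 : ℤ) - 1) = (-1 : ℤ) := by norm_num
      rw [h0] at h
      have h1 : ((0 : ℕ) : ℤ) = (0 : ℤ) := by norm_num
      simp only [hs, eq_self_iff_true, if_true, h1]
      linear_combination h
    refine ⟨s (k - 2),
      fun w => -(⟪ψc w, (resL R r 0) x⟫_ℂ +
        w * ∑ i ∈ Finset.range (k - 2), w ^ i * ⟪ψc w, (resL R r ((i + 1 : ℕ) : ℤ)) x⟫_ℂ),
      hsA (k - 2), ?_, ?_⟩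
    · refine AnalyticAt.neg (AnalyticAt.add (hpairA _) (analyticAt_id.mul ?_))
      exact Finset.analyticAt_fun_sum _ (fun i _ => (analyticAt_id.pow i).mul (hpairA _))
    · intro w hw
      rw [base w hw, tele (k - 2) w hw]
      have hk1 : w ^ (k - 1) = w ^ (k - 2) * w := by
        rw [← pow_succ]
        congr 1
        omega
      rw [hk1]
      ring
  -- the induction on powers of A
  obtain ⟨u, hu⟩ := hdepth
  have Pm : ∀ m : ℕ, ∃ γ β : ℂ → ℂ, AnalyticAt ℂ γ 0 ∧ AnalyticAt ℂ β 0 ∧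
      ∀ w ∈ Metric.ball (0 : ℂ) ρ,
        ⟪ψc w, W ((resA R W r ^ m) u)⟫_ℂ =
          w ^ m * ⟪ψc w, W u⟫_ℂ + w ^ (k - 1) * γ w + ζ w * β w := by
    intro m
    induction m with
    | zero =>
      refine ⟨0, 0, analyticAt_const, analyticAt_const, ?_⟩
      intro w _
      simp
    | succ m ih =>
      obtain ⟨γ, β, hγ, hβ, hP⟩ := ih
      obtain ⟨γ', β', hγ', hβ', hB⟩ := BR (W ((resA R W r ^ m) u))
      refine ⟨fun w => w * γ w + γ' w, fun w => w * β w + β' w,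
        (analyticAt_id.mul hγ).add hγ', (analyticAt_id.mul hβ).add hβ', ?_⟩
      intro w hw
      have hstep : (resA R W r ^ (m + 1)) u = (resL R r (-1)) (W ((resA R W r ^ m) u)) := by
        rw [pow_succ', ContinuousLinearMap.mul_apply]
        exact hAB _
      rw [hstep, hB w hw, hP w hw, pow_succ]
      ring
  -- the first scalar identity
  have hE1 : ∀ w ∈ Metric.ball (0 : ℂ) ρ,
      w * ⟪ψc w, W (φ 0)⟫_ℂ = ζ w * ⟪ψc w, φ 0⟫_ℂ := by
    intro w hw
    have h := ψrel' w hw (φ 0)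
    rw [hN0, inner_smul_right] at h
    have hζw : ζ w = z w - z₀ := rfl
    linear_combination h - ⟪ψc w, φ 0⟫_ℂ * hζw
  -- combine
  obtain ⟨γ, β, hγ, hβ, hP⟩ := Pm (k - 1)
  set afun : ℂ → ℂ := fun w => ⟪ψc w, W u⟫_ℂ + γ w with hafun
  set cfun : ℂ → ℂ := fun w => ⟪ψc w, φ 0⟫_ℂ - w * β w with hcfun
  have hkey : ∀ w ∈ Metric.ball (0 : ℂ) ρ, ζ w * cfun w = w ^ k * afun w := by
    intro w hw
    have h1 := hE1 w hw
    have h2 := hP w hw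
    rw [hu] at h2
    have hpow : (w : ℂ) ^ k = w ^ (k - 1) * w := by
      rw [← pow_succ]
      congr 1
      omega
    rw [hpow]
    simp only [hcfun, hafun]
    linear_combination w * h2 - h1
  have hc0 : cfun 0 = ⟪ψ 0, φ 0⟫_ℂ := by
    simp [hcfun, hψcdef]
  have hc0' : cfun 0 ≠ 0 := by rw [hc0]; exact hpair
  have hcA : AnalyticAt ℂ cfun 0 := (hpairA (φ 0)).sub (analyticAt_id.mul hβ)
  have haA : AnalyticAt ℂ afun 0 := (hpairA (W u)).add hγ
  set efun : ℂ → ℂ := fun w => afun w / cfun w with hefun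
  have heA : AnalyticAt ℂ efun 0 := haA.div hcA hc0'
  have hζfac : ζ =ᶠ[𝓝 (0 : ℂ)] fun w => w ^ k * efun w := by
    have h1 : ∀ᶠ w in 𝓝 (0 : ℂ), cfun w ≠ 0 := hcA.continuousAt.eventually_ne hc0'
    filter_upwards [h1, Metric.ball_mem_nhds (0 : ℂ) hρ] with w hcw hw
    have h2 := hkey w hw
    simp only [hefun]
    field_simp
    linear_combination h2
  constructor
  · -- derivatives of the eigenvalue
    intro j hj1 hjk
    have hζj : iteratedDeriv j ζ 0 = 0 :=
      iteratedDeriv_eq_zero_of_factor j k ζ efun hjk heA hζfac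
    obtain ⟨i, rfl⟩ : ∃ i, j = i + 1 := ⟨j - 1, by omega⟩
    rw [iteratedDeriv_succ'] at hζj ⊢
    have hder : deriv ζ = deriv z := by
      funext w
      simp only [hζdef]
      exact deriv_sub_const z₀
    rw [← hder]
    exact hζj
  · -- orthogonality of the derivatives of the eigenvector
    intro j hjk χ hχ
    set T : H →L[ℂ] ℂ := (innerSL ℂ χ).comp W with hT
    set αf : ℂ → ℂ := fun w => ⟪χ, W (φ w)⟫_ℂ with hαf
    set bf : ℂ → ℂ := fun w => ⟪χ, φ w⟫_ℂ with hbf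
    have hχrel : ∀ y : H, ⟪χ, N₀ y⟫_ℂ = z₀ * ⟪χ, y⟫_ℂ := by
      intro y
      rw [← ContinuousLinearMap.adjoint_inner_left, hχ, inner_smul_left, Complex.conj_conj]
    have hαζ : ∀ w ∈ Metric.ball (0 : ℂ) ρ, w * αf w = ζ w * bf w := by
      intro w hw
      have h2 : ⟪χ, (N₀ + w • W) (φ w)⟫_ℂ = z w * bf w := by
        rw [heig w hw, inner_smul_right]
      simp only [ContinuousLinearMap.add_apply, ContinuousLinearMap.smul_apply,
        inner_add_right, inner_smul_right, hχrel] at h2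
      have hζw : ζ w = z w - z₀ := rfl
      linear_combination h2 - bf w * hζw
    have hbA : AnalyticAt ℂ bf 0 := ((innerSL ℂ χ).analyticAt (φ 0)).comp (hφ 0 hball0)
    have hαA : AnalyticAt ℂ αf 0 := (T.analyticAt (φ 0)).comp (hφ 0 hball0)
    have hg : AnalyticAt ℂ (fun w => w ^ (k - 1) * (efun w * bf w)) 0 :=
      (analyticAt_id.pow (k - 1)).mul (heA.mul hbA)
    have hαfac : αf =ᶠ[𝓝 (0 : ℂ)] fun w => w ^ (k - 1) * (efun w * bf w) := by
      refine eventuallyEq_of_punctured hαA.continuousAt hg.continuousAt ?_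
      have hb' : Metric.ball (0 : ℂ) ρ ∈ 𝓝[≠] (0 : ℂ) :=
        nhdsWithin_le_nhds (Metric.ball_mem_nhds (0 : ℂ) hρ)
      have hζ' : {w : ℂ | ζ w = w ^ k * efun w} ∈ 𝓝[≠] (0 : ℂ) :=
        nhdsWithin_le_nhds hζfac
      filter_upwards [hb', hζ', self_mem_nhdsWithin] with w hw hζw hw0
      have h2 := hαζ w hw
      rw [hζw] at h2
      have hw0' : (w : ℂ) ≠ 0 := hw0
      have hpow : (w : ℂ) ^ k = w * w ^ (k - 1) := by
        rw [← pow_succ']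
        congr 1
        omega
      rw [hpow] at h2
      have h2' : w * αf w = w * (w ^ (k - 1) * (efun w * bf w)) := by
        rw [h2]
        ring
      exact mul_left_cancel₀ hw0' h2'
    have hvan := iteratedDeriv_eq_zero_of_factor j (k - 1) αf
      (fun w => efun w * bf w) (by omega) (heA.mul hbA) hαfac
    have hclm := iteratedDeriv_clm_comp hρ T j φ hφ
    have hαT : αf = fun w => T (φ w) := rfl
    rw [hαT, hclm] at hvan
    exact hvan
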